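/- For all integers k, n with 1 ≤ k ≤ n−2, one has F_{k,n}(w) − F_{k+1,n}(w) = G_k(w+x) · G_{n-k}(w+kz) / w. -/

import Mathlib

open Finset MvPolynomial

noncomputable section

/-- The field of rational functions in three variables `w, x, z` over `ℚ`. -/
abbrev F3 : Type := FractionRing (MvPolynomial (Fin 3) ℚ)

/-- the variable `w` -/
def W : F3 := algebraMap (MvPolynomial (Fin 3) ℚ) F3 (X 0)
/-- the variable `x` -/
def Xv : F3 := algebraMap (MvPolynomial (Fin 3) ℚ) F3 (X 1)
/-- the variable `z` -/
def Zv : F3 := algebraMap (MvPolynomial (Fin 3) ℚ) F3 (X 2)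

/-- `G_n(w)`, defined by `G_1(w) = 1/w` and, for `n ≥ 2`,
`G_n(w) = ∑_{k=1}^{n-1} G_k(w) G_{n-k}(w+kz) / (w+(n-1)x)`. -/
def G : ℕ → F3 → F3
  | 0, _ => 0
  | 1, w => 1 / w
  | (n + 2), w =>
      ∑ k ∈ (Finset.Icc 1 (n + 1)).attach,
        G k.1 w * G (n + 2 - k.1) (w + (k.1 : F3) * Zv) / (w + ((n + 1 : ℕ) : F3) * Xv)
  termination_by n _ => n
  decreasing_by
  · have := Finset.mem_Icc.mp k.2; omega
  · have := Finset.mem_Icc.mp k.2; omega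

/-- `F_{k,n}(w)` for `1 ≤ k < n`, defined by `F_{1,n}(w) = G_n(w)` and, for `k ≥ 2`,
`F_{k,n}(w) = ∑_{i=1}^{n-k-1} G_{n-k-i}(w+(k+i)z) F_{k,k+i}(w) / (w+(n-1)x)
  + ∑_{i=1}^{k-1} (w+iz) G_i(w+x) F_{k-i,n-i}(w+iz) / (w(w+(n-1)x))`. -/
def Fkn : ℕ → ℕ → F3 → F3
  | 0, _, _ => 0
  | 1, n, w => G n w
  | (j + 2), n, w =>
      (∑ i ∈ (Finset.Icc 1 (n - (j + 2) - 1)).attach,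
        G (n - (j + 2) - i.1) (w + (((j + 2) + i.1 : ℕ) : F3) * Zv) * Fkn (j + 2) ((j + 2) + i.1) w /
          (w + ((n - 1 : ℕ) : F3) * Xv)) +
      ∑ i ∈ (Finset.Icc 1 (j + 1)).attach,
        (w + (i.1 : F3) * Zv) * G i.1 (w + Xv) * Fkn ((j + 2) - i.1) (n - i.1) (w + (i.1 : F3) * Zv) /
          (w * (w + ((n - 1 : ℕ) : F3) * Xv))
  termination_by k n _ => k + n
  decreasing_by
  · have := Finset.mem_Icc.mp i.2; omega
  · have := Finset.mem_Icc.mp i.2; omega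

lemma G_one (w : F3) : G 1 w = 1 / w := by rw [G]

lemma G_eq (n : ℕ) (hn : 2 ≤ n) (w : F3) :
    G n w = (∑ t ∈ Icc 1 (n - 1), G t w * G (n - t) (w + (t : F3) * Zv)) /
      (w + ((n - 1 : ℕ) : F3) * Xv) := by
  obtain ⟨m, rfl⟩ : ∃ m, n = m + 2 := ⟨n - 2, by omega⟩
  rw [G]
  have h1 : m + 2 - 1 = m + 1 := rfl
  rw [h1]
  rw [Finset.sum_attach (Icc 1 (m + 1))
    (fun k => G k w * G (m + 2 - k) (w + (k : F3) * Zv) / (w + ((m + 1 : ℕ) : F3) * Xv))]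
  rw [Finset.sum_div]

lemma G_rec (n : ℕ) (hn : 2 ≤ n) (w : F3) (hD : w + ((n - 1 : ℕ) : F3) * Xv ≠ 0) :
    (w + ((n - 1 : ℕ) : F3) * Xv) * G n w
      = ∑ t ∈ Icc 1 (n - 1), G t w * G (n - t) (w + (t : F3) * Zv) := by
  rw [G_eq n hn w, mul_div_cancel₀ _ hD]

lemma sum_Icc_shift (M c : ℕ) (f : ℕ → F3) :
    ∑ i ∈ Icc 1 M, f (c + i) = ∑ t ∈ Icc (c + 1) (c + M), f t := by
  rw [← Finset.map_add_left_Icc, Finset.sum_map]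
  simp [addLeftEmbedding]

lemma sum_Icc_split (f : ℕ → F3) (a b : ℕ) (h : a ≤ b) :
    ∑ t ∈ Icc 1 b, f t = (∑ t ∈ Icc 1 a, f t) + ∑ t ∈ Icc (a + 1) b, f t := by
  have h0 : ∀ c : ℕ, Icc 1 c = Ioc 0 c := fun c => by
    ext t; simp [Nat.lt_iff_add_one_le]
  have h1 : Icc (a + 1) b = Ioc a b := by
    ext t; simp only [Finset.mem_Icc, Finset.mem_Ioc]; omega
  rw [h0, h0, h1, Finset.sum_Ioc_consecutive _ (Nat.zero_le a) h]

lemma sum_triangle_swap (M : ℕ) (f : ℕ → ℕ → F3) :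
    ∑ a ∈ Icc 1 M, ∑ b ∈ Icc 1 (M - a), f a b
      = ∑ t ∈ Icc 1 M, ∑ a ∈ Icc 1 (t - 1), f a (t - a) := by
  rw [Finset.sum_sigma', Finset.sum_sigma']
  refine Finset.sum_nbij' (i := fun p => ⟨p.1 + p.2, p.1⟩) (j := fun q => ⟨q.2, q.1 - q.2⟩)
    ?_ ?_ ?_ ?_ ?_
  all_goals rintro ⟨u, v⟩ hp
  all_goals simp only [Finset.mem_sigma, Finset.mem_Icc] at hp ⊢
  · omega
  · omega
  · have h1 : u + v - u = v := by omega
    simp [h1]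
  · have h1 : v + (u - v) = u := by omega
    simp [h1]
  · congr 1
    omega

def Good (w : F3) : Prop := ∃ a b : ℕ, w = W + (a : F3) * Xv + (b : F3) * Zv

lemma good_ne {w : F3} (h : Good w) : w ≠ 0 := by
  obtain ⟨a, b, rfl⟩ := h
  have : (X 0 + (a : MvPolynomial (Fin 3) ℚ) * X 1 + (b : MvPolynomial (Fin 3) ℚ) * X 2 :
      MvPolynomial (Fin 3) ℚ) ≠ 0 := by
    intro h0
    have := congrArg (eval (fun i => if i = 0 then (1:ℚ) else 0)) h0
    simp at this
  have hinj := IsFractionRing.injective (MvPolynomial (Fin 3) ℚ) F3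
  have : algebraMap (MvPolynomial (Fin 3) ℚ) F3
      (X 0 + (a : MvPolynomial (Fin 3) ℚ) * X 1 + (b : MvPolynomial (Fin 3) ℚ) * X 2) ≠ 0 :=
    fun hc => this (hinj (by simpa using hc))
  simpa [W, Xv, Zv, map_add, map_mul, map_natCast] using this

lemma good_addZ {w : F3} (h : Good w) (j : ℕ) : Good (w + (j : F3) * Zv) := by
  obtain ⟨a, b, rfl⟩ := h
  exact ⟨a, b + j, by push_cast; ring⟩

lemma good_addX' {w : F3} (h : Good w) (m : ℕ) : Good (w + (m : F3) * Xv) := by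
  obtain ⟨a, b, rfl⟩ := h
  exact ⟨a + m, b, by push_cast; ring⟩

lemma good_addX {w : F3} (h : Good w) : Good (w + Xv) := by
  obtain ⟨a, b, rfl⟩ := h
  exact ⟨a + 1, b, by push_cast; ring⟩

lemma good_W : Good W := ⟨0, 0, by push_cast; ring⟩

set_option maxHeartbeats 2000000 in
lemma keyI : ∀ s : ℕ, 2 ≤ s → ∀ w : F3, Good w →
    w * G s w = ∑ j ∈ Icc 1 (s - 1), G j (w + Xv) * G (s - j) (w + (j : F3) * Zv) := by
  intro s
  induction s using Nat.strong_induction_on with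
  | _ s IH =>
    intro hs w hw
    have hw0 : w ≠ 0 := good_ne hw
    have hwx : w + Xv ≠ 0 := good_ne (good_addX hw)
    have hD : w + ((s - 1 : ℕ) : F3) * Xv ≠ 0 := good_ne (good_addX' hw (s - 1))
    -- the triangle sum, two groupings
    have key := sum_triangle_swap (s - 1) (fun a b =>
      G a (w + Xv) * (G b (w + (a : F3) * Zv) - G b (w + (a : F3) * Zv + Xv)) *
        G (s - a - b) (w + (a : F3) * Zv + (b : F3) * Zv))
    -- left side: group by a
    have hL : (∑ a ∈ Icc 1 (s - 1), ∑ b ∈ Icc 1 (s - 1 - a),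
        G a (w + Xv) * (G b (w + (a : F3) * Zv) - G b (w + (a : F3) * Zv + Xv)) *
          G (s - a - b) (w + (a : F3) * Zv + (b : F3) * Zv))
        = ∑ a ∈ Icc 1 (s - 1), ((s - 1 - a : ℕ) : F3) * Xv *
            (G a (w + Xv) * G (s - a) (w + (a : F3) * Zv)) := by
      refine Finset.sum_congr rfl ?_
      intro a ha
      rw [Finset.mem_Icc] at ha
      by_cases ha2 : a ≤ s - 2
      · -- inner sums via G_rec and IH at base w + a Zv
        have hgood' : Good (w + (a : F3) * Zv) := good_addZ hw a
        have hsa2 : 2 ≤ s - a := by omega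
        have hsalt : s - a < s := by omega
        have hrange : s - 1 - a = s - a - 1 := by omega
        have hrec := G_rec (s - a) hsa2 (w + (a : F3) * Zv)
          (good_ne (good_addX' hgood' (s - a - 1)))
        have hih := IH (s - a) hsalt hsa2 (w + (a : F3) * Zv) hgood'
        calc ∑ b ∈ Icc 1 (s - 1 - a),
              G a (w + Xv) * (G b (w + (a : F3) * Zv) - G b (w + (a : F3) * Zv + Xv)) *
                G (s - a - b) (w + (a : F3) * Zv + (b : F3) * Zv)
            = G a (w + Xv) *
              ((∑ b ∈ Icc 1 (s - a - 1), G b (w + (a : F3) * Zv) *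
                  G (s - a - b) (w + (a : F3) * Zv + (b : F3) * Zv))
               - ∑ b ∈ Icc 1 (s - a - 1), G b (w + (a : F3) * Zv + Xv) *
                  G (s - a - b) (w + (a : F3) * Zv + (b : F3) * Zv)) := by
              rw [hrange, ← Finset.sum_sub_distrib, Finset.mul_sum]
              exact Finset.sum_congr rfl (fun b _ => by ring)
          _ = G a (w + Xv) *
              ((w + (a : F3) * Zv + ((s - a - 1 : ℕ) : F3) * Xv) * G (s - a) (w + (a : F3) * Zv)
               - (w + (a : F3) * Zv) * G (s - a) (w + (a : F3) * Zv)) := by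
              rw [← hrec, ← hih]
          _ = ((s - 1 - a : ℕ) : F3) * Xv *
              (G a (w + Xv) * G (s - a) (w + (a : F3) * Zv)) := by
              rw [hrange]; ring
      · -- a = s - 1 : empty sum and zero coefficient
        have ha1 : a = s - 1 := by omega
        have h0 : s - 1 - a = 0 := by omega
        rw [h0]
        simp
    -- right side: group by t
    have hR : (∑ t ∈ Icc 1 (s - 1), ∑ a ∈ Icc 1 (t - 1),
        G a (w + Xv) * (G (t - a) (w + (a : F3) * Zv) - G (t - a) (w + (a : F3) * Zv + Xv)) *
          G (s - a - (t - a)) (w + (a : F3) * Zv + ((t - a : ℕ) : F3) * Zv))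
        = ∑ t ∈ Icc 1 (s - 1),
            (w * G t w - (w + Xv + ((t - 1 : ℕ) : F3) * Xv) * G t (w + Xv)) *
              G (s - t) (w + (t : F3) * Zv) := by
      refine Finset.sum_congr rfl ?_
      intro t ht
      rw [Finset.mem_Icc] at ht
      by_cases ht2 : 2 ≤ t
      · have hih := IH t (by omega) ht2 w hw
        have hrec := G_rec t ht2 (w + Xv) (good_ne (good_addX' (good_addX hw) (t - 1)))
        calc ∑ a ∈ Icc 1 (t - 1),
              G a (w + Xv) * (G (t - a) (w + (a : F3) * Zv) - G (t - a) (w + (a : F3) * Zv + Xv)) *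
                G (s - a - (t - a)) (w + (a : F3) * Zv + ((t - a : ℕ) : F3) * Zv)
            = ((∑ a ∈ Icc 1 (t - 1), G a (w + Xv) * G (t - a) (w + (a : F3) * Zv))
               - ∑ a ∈ Icc 1 (t - 1), G a (w + Xv) * G (t - a) (w + Xv + (a : F3) * Zv)) *
                G (s - t) (w + (t : F3) * Zv) := by
              rw [← Finset.sum_sub_distrib, Finset.sum_mul]
              refine Finset.sum_congr rfl ?_
              intro a ha
              rw [Finset.mem_Icc] at ha
              have e1 : s - a - (t - a) = s - t := by omega
              have e2 : w + (a : F3) * Zv + ((t - a : ℕ) : F3) * Zv = w + (t : F3) * Zv := by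
                have : (a : F3) + ((t - a : ℕ) : F3) = (t : F3) := by
                  have : a + (t - a) = t := by omega
                  calc (a : F3) + ((t - a : ℕ) : F3) = ((a + (t - a) : ℕ) : F3) := by push_cast; ring
                    _ = (t : F3) := by rw [this]
                calc w + (a : F3) * Zv + ((t - a : ℕ) : F3) * Zv
                    = w + ((a : F3) + ((t - a : ℕ) : F3)) * Zv := by ring
                  _ = w + (t : F3) * Zv := by rw [this]
              have e3 : w + (a : F3) * Zv + Xv = w + Xv + (a : F3) * Zv := by ring
              rw [e1, e2, e3]
              ring
          _ = (w * G t w - (w + Xv + ((t - 1 : ℕ) : F3) * Xv) * G t (w + Xv)) *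
                G (s - t) (w + (t : F3) * Zv) := by
              rw [← hih, ← hrec]
      · -- t = 1
        have ht1 : t = 1 := by omega
        subst ht1
        simp only [Nat.sub_self, Nat.cast_zero, zero_mul, add_zero, G_one]
        rw [mul_one_div, mul_one_div, div_self hw0, div_self hwx]
        simp
    rw [hL] at key
    rw [hR] at key
    -- now conclude
    have h2 : ∑ t ∈ Icc 1 (s - 1), (w * G t w) * G (s - t) (w + (t : F3) * Zv)
        = w * ((w + ((s - 1 : ℕ) : F3) * Xv) * G s w) := by
      rw [G_rec s hs w hD, Finset.mul_sum]
      exact Finset.sum_congr rfl (fun t _ => by ring)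
    have h3 : ∑ a ∈ Icc 1 (s - 1), (w + ((s - 1 : ℕ) : F3) * Xv) *
          (G a (w + Xv) * G (s - a) (w + (a : F3) * Zv))
        = (∑ a ∈ Icc 1 (s - 1), ((s - 1 - a : ℕ) : F3) * Xv *
            (G a (w + Xv) * G (s - a) (w + (a : F3) * Zv)))
          + ∑ a ∈ Icc 1 (s - 1), (w + Xv + ((a - 1 : ℕ) : F3) * Xv) *
            (G a (w + Xv) * G (s - a) (w + (a : F3) * Zv)) := by
      rw [← Finset.sum_add_distrib]
      refine Finset.sum_congr rfl ?_
      intro a ha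
      rw [Finset.mem_Icc] at ha
      have hc : ((s - 1 : ℕ) : F3) = ((s - 1 - a : ℕ) : F3) + 1 + ((a - 1 : ℕ) : F3) := by
        have h1 : (s - 1 - a) + 1 + (a - 1) = s - 1 := by omega
        calc ((s - 1 : ℕ) : F3) = (((s - 1 - a) + 1 + (a - 1) : ℕ) : F3) := by rw [h1]
          _ = ((s - 1 - a : ℕ) : F3) + 1 + ((a - 1 : ℕ) : F3) := by push_cast; ring
      rw [hc]; ring
    have h4 : ∑ t ∈ Icc 1 (s - 1),
          (w * G t w - (w + Xv + ((t - 1 : ℕ) : F3) * Xv) * G t (w + Xv)) *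
            G (s - t) (w + (t : F3) * Zv)
        = (∑ t ∈ Icc 1 (s - 1), (w * G t w) * G (s - t) (w + (t : F3) * Zv))
          - ∑ t ∈ Icc 1 (s - 1), (w + Xv + ((t - 1 : ℕ) : F3) * Xv) *
              (G t (w + Xv) * G (s - t) (w + (t : F3) * Zv)) := by
      rw [← Finset.sum_sub_distrib]
      exact Finset.sum_congr rfl (fun t _ => by ring)
    have h5 : (w + ((s - 1 : ℕ) : F3) * Xv) *
        (∑ j ∈ Icc 1 (s - 1), G j (w + Xv) * G (s - j) (w + (j : F3) * Zv))
        = (w + ((s - 1 : ℕ) : F3) * Xv) * (w * G s w) := by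
      rw [Finset.mul_sum, h3, key, h4, h2]
      ring
    exact (mul_left_cancel₀ hD h5).symm



lemma Fkn_eq (j0 n : ℕ) (w : F3) :
    Fkn (j0 + 2) n w =
      (∑ i ∈ Icc 1 (n - (j0 + 2) - 1),
        G (n - (j0 + 2) - i) (w + (((j0 + 2) + i : ℕ) : F3) * Zv) * Fkn (j0 + 2) ((j0 + 2) + i) w)
        / (w + ((n - 1 : ℕ) : F3) * Xv)
      + (∑ i ∈ Icc 1 (j0 + 1),
          (w + (i : F3) * Zv) * G i (w + Xv) * Fkn ((j0 + 2) - i) (n - i) (w + (i : F3) * Zv))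
          / (w * (w + ((n - 1 : ℕ) : F3) * Xv)) := by
  rw [Fkn]
  rw [Finset.sum_attach (Icc 1 (n - (j0 + 2) - 1)) (fun i =>
    G (n - (j0 + 2) - i) (w + (((j0 + 2) + i : ℕ) : F3) * Zv) * Fkn (j0 + 2) ((j0 + 2) + i) w /
      (w + ((n - 1 : ℕ) : F3) * Xv))]
  rw [Finset.sum_attach (Icc 1 (j0 + 1)) (fun i =>
    (w + (i : F3) * Zv) * G i (w + Xv) * Fkn ((j0 + 2) - i) (n - i) (w + (i : F3) * Zv) /
      (w * (w + ((n - 1 : ℕ) : F3) * Xv)))]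
  rw [Finset.sum_div, Finset.sum_div]

set_option maxHeartbeats 16000000 in
lemma closedForm (N : ℕ) : ∀ k n, k + n ≤ N → 1 ≤ k → k < n → ∀ w, Good w →
    Fkn k n w = G n w -
      (∑ j ∈ Icc 1 (k - 1), G j (w + Xv) * G (n - j) (w + (j : F3) * Zv)) / w := by
  induction N with
  | zero => intro k n h h1 h2 w hw; omega
  | succ N IHN =>
    intro k n hN hk1 hkn w hw
    have hsplit : k = 1 ∨ ∃ j0, k = j0 + 2 := by
      rcases k with _ | _ | j0
      · omega
      · exact Or.inl rfl
      · exact Or.inr ⟨j0, rfl⟩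
    rcases hsplit with rfl | ⟨j0, rfl⟩
    · rw [Fkn]
      simp
    · -- main case
      have hw0 : w ≠ 0 := good_ne hw
      have hwx : w + Xv ≠ 0 := good_ne (good_addX hw)
      have hD : w + ((n - 1 : ℕ) : F3) * Xv ≠ 0 := good_ne (good_addX' hw (n - 1))
      have hwD : w * (w + ((n - 1 : ℕ) : F3) * Xv) ≠ 0 := mul_ne_zero hw0 hD
      have hn2 : 2 ≤ n := by omega
      -- substitute IH into the two sums
      have hA : (∑ i ∈ Icc 1 (n - (j0 + 2) - 1),
          G (n - (j0 + 2) - i) (w + (((j0 + 2) + i : ℕ) : F3) * Zv) *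
            Fkn (j0 + 2) ((j0 + 2) + i) w)
          = ∑ i ∈ Icc 1 (n - (j0 + 2) - 1),
            G (n - (j0 + 2) - i) (w + (((j0 + 2) + i : ℕ) : F3) * Zv) *
              (G ((j0 + 2) + i) w -
                (∑ j ∈ Icc 1 (j0 + 1), G j (w + Xv) *
                  G ((j0 + 2) + i - j) (w + (j : F3) * Zv)) / w) := by
        refine Finset.sum_congr rfl ?_
        intro i hi
        rw [Finset.mem_Icc] at hi
        rw [IHN (j0 + 2) ((j0 + 2) + i) (by omega) (by omega) (by omega) w hw]
        norm_num
      have hB : (∑ i ∈ Icc 1 (j0 + 1),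
          (w + (i : F3) * Zv) * G i (w + Xv) *
            Fkn ((j0 + 2) - i) (n - i) (w + (i : F3) * Zv))
          = ∑ i ∈ Icc 1 (j0 + 1),
            (w + (i : F3) * Zv) * G i (w + Xv) *
              (G (n - i) (w + (i : F3) * Zv) -
                (∑ j ∈ Icc 1 ((j0 + 2) - i - 1), G j (w + (i : F3) * Zv + Xv) *
                  G (n - i - j) (w + (i : F3) * Zv + (j : F3) * Zv)) / (w + (i : F3) * Zv)) := by
        refine Finset.sum_congr rfl ?_
        intro i hi
        rw [Finset.mem_Icc] at hi
        rw [IHN ((j0 + 2) - i) (n - i) (by omega) (by omega) (by omega)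
          (w + (i : F3) * Zv) (good_addZ hw i)]
      rw [Fkn_eq, hA, hB]
      rw [show j0 + 2 - 1 = j0 + 1 from rfl]
      have hE : w * (∑ i ∈ Icc 1 (n - (j0 + 2) - 1),
            G (n - (j0 + 2) - i) (w + (((j0 + 2) + i : ℕ) : F3) * Zv) *
              (G ((j0 + 2) + i) w -
                (∑ j ∈ Icc 1 (j0 + 1), G j (w + Xv) *
                  G ((j0 + 2) + i - j) (w + (j : F3) * Zv)) / w))
          + (∑ i ∈ Icc 1 (j0 + 1),
            (w + (i : F3) * Zv) * G i (w + Xv) *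
              (G (n - i) (w + (i : F3) * Zv) -
                (∑ j ∈ Icc 1 ((j0 + 2) - i - 1), G j (w + (i : F3) * Zv + Xv) *
                  G (n - i - j) (w + (i : F3) * Zv + (j : F3) * Zv)) / (w + (i : F3) * Zv)))
          = w * (w + ((n - 1 : ℕ) : F3) * Xv) *
            (G n w - (∑ j ∈ Icc 1 (j0 + 1), G j (w + Xv) * G (n - j) (w + (j : F3) * Zv)) / w) := by
        have e1 : ∀ S : F3, w * (S / w) = S := fun S => by
          rw [mul_comm, div_mul_cancel₀ _ hw0]
        -- (1) expand w * A'
        have hP : w * (∑ i ∈ Icc 1 (n - (j0 + 2) - 1),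
              G (n - (j0 + 2) - i) (w + (((j0 + 2) + i : ℕ) : F3) * Zv) *
                (G ((j0 + 2) + i) w -
                  (∑ j ∈ Icc 1 (j0 + 1), G j (w + Xv) *
                    G ((j0 + 2) + i - j) (w + (j : F3) * Zv)) / w))
            = (∑ i ∈ Icc 1 (n - (j0 + 2) - 1),
                (w * G ((j0 + 2) + i) w) *
                  G (n - (j0 + 2) - i) (w + (((j0 + 2) + i : ℕ) : F3) * Zv))
              - ∑ i ∈ Icc 1 (n - (j0 + 2) - 1),
                  G (n - (j0 + 2) - i) (w + (((j0 + 2) + i : ℕ) : F3) * Zv) *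
                    (∑ j ∈ Icc 1 (j0 + 1), G j (w + Xv) *
                      G ((j0 + 2) + i - j) (w + (j : F3) * Zv)) := by
          rw [Finset.mul_sum, ← Finset.sum_sub_distrib]
          refine Finset.sum_congr rfl fun i hi => ?_
          linear_combination
            (-(G (n - (j0 + 2) - i) (w + (((j0 + 2) + i : ℕ) : F3) * Zv))) *
              e1 (∑ j ∈ Icc 1 (j0 + 1), G j (w + Xv) * G ((j0 + 2) + i - j) (w + (j : F3) * Zv))
        -- (2) the P1 sum
        have hP1 : (∑ i ∈ Icc 1 (n - (j0 + 2) - 1),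
              (w * G ((j0 + 2) + i) w) *
                G (n - (j0 + 2) - i) (w + (((j0 + 2) + i : ℕ) : F3) * Zv))
            = w * ((w + ((n - 1 : ℕ) : F3) * Xv) * G n w)
              - ∑ t ∈ Icc 1 (j0 + 2), (w * G t w) * G (n - t) (w + (t : F3) * Zv) := by
          have s1 : (∑ i ∈ Icc 1 (n - (j0 + 2) - 1),
                (w * G ((j0 + 2) + i) w) *
                  G (n - (j0 + 2) - i) (w + (((j0 + 2) + i : ℕ) : F3) * Zv))
              = ∑ i ∈ Icc 1 (n - (j0 + 2) - 1),
                  (w * G ((j0 + 2) + i) w) *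
                    G (n - ((j0 + 2) + i)) (w + (((j0 + 2) + i : ℕ) : F3) * Zv) := by
            refine Finset.sum_congr rfl fun i hi => ?_
            rw [Nat.sub_sub]
          rw [s1, sum_Icc_shift (n - (j0 + 2) - 1) (j0 + 2)
            (fun t => (w * G t w) * G (n - t) (w + (t : F3) * Zv)),
            show (j0 + 2) + (n - (j0 + 2) - 1) = n - 1 from by omega]
          have s2 := sum_Icc_split (fun t => (w * G t w) * G (n - t) (w + (t : F3) * Zv))
            (j0 + 2) (n - 1) (by omega)
          have s3 : ∑ t ∈ Icc 1 (n - 1), (w * G t w) * G (n - t) (w + (t : F3) * Zv)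
              = w * ((w + ((n - 1 : ℕ) : F3) * Xv) * G n w) := by
            rw [G_rec n hn2 w hD, Finset.mul_sum]
            exact Finset.sum_congr rfl fun t _ => by ring
          linear_combination -s2 + s3
        -- (3) the P2 double sum
        have hP2 : (∑ i ∈ Icc 1 (n - (j0 + 2) - 1),
              G (n - (j0 + 2) - i) (w + (((j0 + 2) + i : ℕ) : F3) * Zv) *
                (∑ j ∈ Icc 1 (j0 + 1), G j (w + Xv) *
                  G ((j0 + 2) + i - j) (w + (j : F3) * Zv)))
            = (∑ j ∈ Icc 1 (j0 + 1), (w + (j : F3) * Zv + ((n - j - 1 : ℕ) : F3) * Xv) *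
                (G j (w + Xv) * G (n - j) (w + (j : F3) * Zv)))
              - ∑ j ∈ Icc 1 (j0 + 1), G j (w + Xv) *
                  (∑ u ∈ Icc 1 ((j0 + 2) - j), G u (w + (j : F3) * Zv) *
                    G (n - j - u) (w + (j : F3) * Zv + (u : F3) * Zv)) := by
          have r1 : (∑ i ∈ Icc 1 (n - (j0 + 2) - 1),
                G (n - (j0 + 2) - i) (w + (((j0 + 2) + i : ℕ) : F3) * Zv) *
                  (∑ j ∈ Icc 1 (j0 + 1), G j (w + Xv) *
                    G ((j0 + 2) + i - j) (w + (j : F3) * Zv)))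
              = ∑ j ∈ Icc 1 (j0 + 1), ∑ i ∈ Icc 1 (n - (j0 + 2) - 1),
                  G j (w + Xv) * (G ((j0 + 2) - j + i) (w + (j : F3) * Zv) *
                    G (n - j - ((j0 + 2) - j + i))
                      (w + (j : F3) * Zv + (((j0 + 2) - j + i : ℕ) : F3) * Zv)) := by
            have r1a : ∀ i ∈ Icc 1 (n - (j0 + 2) - 1),
                G (n - (j0 + 2) - i) (w + (((j0 + 2) + i : ℕ) : F3) * Zv) *
                  (∑ j ∈ Icc 1 (j0 + 1), G j (w + Xv) *
                    G ((j0 + 2) + i - j) (w + (j : F3) * Zv))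
                = ∑ j ∈ Icc 1 (j0 + 1),
                    G (n - (j0 + 2) - i) (w + (((j0 + 2) + i : ℕ) : F3) * Zv) *
                      (G j (w + Xv) * G ((j0 + 2) + i - j) (w + (j : F3) * Zv)) :=
              fun i _ => Finset.mul_sum _ _ _
            rw [Finset.sum_congr rfl r1a, Finset.sum_comm]
            refine Finset.sum_congr rfl fun j hj => ?_
            rw [Finset.mem_Icc] at hj
            refine Finset.sum_congr rfl fun i hi => ?_
            rw [Finset.mem_Icc] at hi
            have idx1 : (j0 + 2) + i - j = (j0 + 2) - j + i := by omega
            have idx2 : n - (j0 + 2) - i = n - j - ((j0 + 2) - j + i) := by omega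
            have harg : w + (((j0 + 2) + i : ℕ) : F3) * Zv
                = w + (j : F3) * Zv + (((j0 + 2) - j + i : ℕ) : F3) * Zv := by
              have h1 : j + ((j0 + 2) - j + i) = (j0 + 2) + i := by omega
              calc w + (((j0 + 2) + i : ℕ) : F3) * Zv
                  = w + ((j + ((j0 + 2) - j + i) : ℕ) : F3) * Zv := by rw [h1]
                _ = w + (j : F3) * Zv + (((j0 + 2) - j + i : ℕ) : F3) * Zv := by
                    push_cast; ring
            rw [idx1, idx2, harg]
            ring
          rw [r1]
          have r2 : ∀ j ∈ Icc 1 (j0 + 1),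
              (∑ i ∈ Icc 1 (n - (j0 + 2) - 1),
                G j (w + Xv) * (G ((j0 + 2) - j + i) (w + (j : F3) * Zv) *
                  G (n - j - ((j0 + 2) - j + i))
                    (w + (j : F3) * Zv + (((j0 + 2) - j + i : ℕ) : F3) * Zv)))
              = (w + (j : F3) * Zv + ((n - j - 1 : ℕ) : F3) * Xv) *
                  (G j (w + Xv) * G (n - j) (w + (j : F3) * Zv))
                - G j (w + Xv) *
                  (∑ u ∈ Icc 1 ((j0 + 2) - j), G u (w + (j : F3) * Zv) *
                    G (n - j - u) (w + (j : F3) * Zv + (u : F3) * Zv)) := by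
            intro j hj
            rw [Finset.mem_Icc] at hj
            rw [← Finset.mul_sum]
            rw [sum_Icc_shift (n - (j0 + 2) - 1) ((j0 + 2) - j)
              (fun u => G u (w + (j : F3) * Zv) *
                G (n - j - u) (w + (j : F3) * Zv + (u : F3) * Zv)),
              show (j0 + 2) - j + (n - (j0 + 2) - 1) = n - j - 1 from by omega]
            have s2 := sum_Icc_split
              (fun u => G u (w + (j : F3) * Zv) *
                G (n - j - u) (w + (j : F3) * Zv + (u : F3) * Zv))
              ((j0 + 2) - j) (n - j - 1) (by omega)
            have s3 : (∑ u ∈ Icc 1 (n - j - 1), G u (w + (j : F3) * Zv) *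
                  G (n - j - u) (w + (j : F3) * Zv + (u : F3) * Zv))
                = (w + (j : F3) * Zv + ((n - j - 1 : ℕ) : F3) * Xv) * G (n - j) (w + (j : F3) * Zv) := by
              rw [G_rec (n - j) (by omega) (w + (j : F3) * Zv)
                (good_ne (good_addX' (good_addZ hw j) (n - j - 1)))]
            linear_combination (G j (w + Xv)) * (-s2 + s3)
          rw [Finset.sum_congr rfl r2, Finset.sum_sub_distrib]
        -- (4) the Sigma-d sum
        have hSd : (∑ j ∈ Icc 1 (j0 + 1), G j (w + Xv) *
              (∑ u ∈ Icc 1 ((j0 + 2) - j), G u (w + (j : F3) * Zv) *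
                G (n - j - u) (w + (j : F3) * Zv + (u : F3) * Zv)))
            = (∑ t ∈ Icc 1 (j0 + 2), (w * G t w) * G (n - t) (w + (t : F3) * Zv))
              - G (n - 1) (w + 1 * Zv) := by
          have d1 : (∑ j ∈ Icc 1 (j0 + 2), G j (w + Xv) *
                (∑ u ∈ Icc 1 ((j0 + 2) - j), G u (w + (j : F3) * Zv) *
                  G (n - j - u) (w + (j : F3) * Zv + (u : F3) * Zv)))
              = ∑ j ∈ Icc 1 (j0 + 1), G j (w + Xv) *
                (∑ u ∈ Icc 1 ((j0 + 2) - j), G u (w + (j : F3) * Zv) *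
                  G (n - j - u) (w + (j : F3) * Zv + (u : F3) * Zv)) := by
            rw [sum_Icc_split _ (j0 + 1) (j0 + 2) (by omega)]
            have : Icc (j0 + 1 + 1) (j0 + 2) = Icc (j0 + 2) (j0 + 2) := by norm_num
            rw [this, Finset.Icc_self, Finset.sum_singleton, Nat.sub_self]
            simp
          have d2 : (∑ j ∈ Icc 1 (j0 + 2), G j (w + Xv) *
                (∑ u ∈ Icc 1 ((j0 + 2) - j), G u (w + (j : F3) * Zv) *
                  G (n - j - u) (w + (j : F3) * Zv + (u : F3) * Zv)))
              = ∑ t ∈ Icc 1 (j0 + 2), (∑ j ∈ Icc 1 (t - 1),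
                  G j (w + Xv) * G (t - j) (w + (j : F3) * Zv)) *
                    G (n - t) (w + (t : F3) * Zv) := by
            have d2a : ∀ j ∈ Icc 1 (j0 + 2),
                G j (w + Xv) * (∑ u ∈ Icc 1 ((j0 + 2) - j), G u (w + (j : F3) * Zv) *
                  G (n - j - u) (w + (j : F3) * Zv + (u : F3) * Zv))
                = ∑ u ∈ Icc 1 ((j0 + 2) - j), G j (w + Xv) * (G u (w + (j : F3) * Zv) *
                    G (n - j - u) (w + (j : F3) * Zv + (u : F3) * Zv)) := by
              intro j _
              rw [Finset.mul_sum]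
            rw [Finset.sum_congr rfl d2a]
            rw [sum_triangle_swap (j0 + 2) (fun j u => G j (w + Xv) * (G u (w + (j : F3) * Zv) *
              G (n - j - u) (w + (j : F3) * Zv + (u : F3) * Zv)))]
            refine Finset.sum_congr rfl fun t ht => ?_
            rw [Finset.mem_Icc] at ht
            rw [Finset.sum_mul]
            refine Finset.sum_congr rfl fun j hj => ?_
            rw [Finset.mem_Icc] at hj
            have idx : n - j - (t - j) = n - t := by omega
            have harg : w + (j : F3) * Zv + ((t - j : ℕ) : F3) * Zv = w + (t : F3) * Zv := by
              have h1 : j + (t - j) = t := by omega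
              calc w + (j : F3) * Zv + ((t - j : ℕ) : F3) * Zv
                  = w + ((j + (t - j) : ℕ) : F3) * Zv := by push_cast; ring
                _ = w + (t : F3) * Zv := by rw [h1]
            rw [idx, harg]
            ring
          have d3 : (∑ t ∈ Icc 1 (j0 + 2), (∑ j ∈ Icc 1 (t - 1),
                G j (w + Xv) * G (t - j) (w + (j : F3) * Zv)) *
                  G (n - t) (w + (t : F3) * Zv))
              = ∑ t ∈ Icc 2 (j0 + 2), (w * G t w) * G (n - t) (w + (t : F3) * Zv) := by
            rw [sum_Icc_split _ 1 (j0 + 2) (by omega)]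
            have h1 : (∑ t ∈ Icc 1 1, (∑ j ∈ Icc 1 (t - 1),
                G j (w + Xv) * G (t - j) (w + (j : F3) * Zv)) *
                  G (n - t) (w + (t : F3) * Zv)) = 0 := by
              rw [Finset.Icc_self, Finset.sum_singleton]
              norm_num
            rw [h1, zero_add]
            refine Finset.sum_congr (by norm_num) fun t ht => ?_
            rw [Finset.mem_Icc] at ht
            rw [← keyI t (by omega) w hw]
          have d4 : (∑ t ∈ Icc 1 (j0 + 2), (w * G t w) * G (n - t) (w + (t : F3) * Zv))
              = G (n - 1) (w + 1 * Zv)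
                + ∑ t ∈ Icc 2 (j0 + 2), (w * G t w) * G (n - t) (w + (t : F3) * Zv) := by
            rw [sum_Icc_split _ 1 (j0 + 2) (by omega)]
            congr 1
            rw [Finset.Icc_self, Finset.sum_singleton, G_one, mul_one_div, div_self hw0,
              one_mul, Nat.cast_one]
          linear_combination -d1 + d2 + d3 - d4
        -- (5) expand B'
        have hQ : (∑ i ∈ Icc 1 (j0 + 1),
              (w + (i : F3) * Zv) * G i (w + Xv) *
                (G (n - i) (w + (i : F3) * Zv) -
                  (∑ j ∈ Icc 1 ((j0 + 2) - i - 1), G j (w + (i : F3) * Zv + Xv) *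
                    G (n - i - j) (w + (i : F3) * Zv + (j : F3) * Zv)) / (w + (i : F3) * Zv)))
            = (∑ i ∈ Icc 1 (j0 + 1), (w + (i : F3) * Zv) *
                (G i (w + Xv) * G (n - i) (w + (i : F3) * Zv)))
              - ∑ i ∈ Icc 1 (j0 + 1), G i (w + Xv) *
                  (∑ j ∈ Icc 1 ((j0 + 2) - i - 1), G j (w + (i : F3) * Zv + Xv) *
                    G (n - i - j) (w + (i : F3) * Zv + (j : F3) * Zv)) := by
          rw [← Finset.sum_sub_distrib]
          refine Finset.sum_congr rfl fun i hi => ?_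
          have hiz : w + (i : F3) * Zv ≠ 0 := good_ne (good_addZ hw i)
          have e2 : (w + (i : F3) * Zv) *
              ((∑ j ∈ Icc 1 ((j0 + 2) - i - 1), G j (w + (i : F3) * Zv + Xv) *
                G (n - i - j) (w + (i : F3) * Zv + (j : F3) * Zv)) / (w + (i : F3) * Zv))
              = ∑ j ∈ Icc 1 ((j0 + 2) - i - 1), G j (w + (i : F3) * Zv + Xv) *
                G (n - i - j) (w + (i : F3) * Zv + (j : F3) * Zv) := by
            rw [mul_comm, div_mul_cancel₀ _ hiz]
          linear_combination (-(G i (w + Xv))) * e2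
        -- (6) the Q2 double sum
        have hQ2 : (∑ i ∈ Icc 1 (j0 + 1), G i (w + Xv) *
              (∑ j ∈ Icc 1 ((j0 + 2) - i - 1), G j (w + (i : F3) * Zv + Xv) *
                G (n - i - j) (w + (i : F3) * Zv + (j : F3) * Zv)))
            = (∑ t ∈ Icc 1 (j0 + 1), (w + Xv + ((t - 1 : ℕ) : F3) * Xv) *
                (G t (w + Xv) * G (n - t) (w + (t : F3) * Zv)))
              - G (n - 1) (w + 1 * Zv) := by
          have q0 : ∀ i : ℕ, (j0 + 2) - i - 1 = (j0 + 1) - i := fun i => by omega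
          have q1 : (∑ i ∈ Icc 1 (j0 + 1), G i (w + Xv) *
                (∑ j ∈ Icc 1 ((j0 + 2) - i - 1), G j (w + (i : F3) * Zv + Xv) *
                  G (n - i - j) (w + (i : F3) * Zv + (j : F3) * Zv)))
              = ∑ i ∈ Icc 1 (j0 + 1), ∑ j ∈ Icc 1 ((j0 + 1) - i),
                  G i (w + Xv) * (G j (w + (i : F3) * Zv + Xv) *
                    G (n - i - j) (w + (i : F3) * Zv + (j : F3) * Zv)) := by
            refine Finset.sum_congr rfl fun i _ => ?_
            rw [q0 i, Finset.mul_sum]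
          rw [q1, sum_triangle_swap (j0 + 1) (fun i j => G i (w + Xv) *
            (G j (w + (i : F3) * Zv + Xv) *
              G (n - i - j) (w + (i : F3) * Zv + (j : F3) * Zv)))]
          have q2 : ∀ t ∈ Icc 1 (j0 + 1),
              (∑ i ∈ Icc 1 (t - 1), G i (w + Xv) *
                (G (t - i) (w + (i : F3) * Zv + Xv) *
                  G (n - i - (t - i)) (w + (i : F3) * Zv + ((t - i : ℕ) : F3) * Zv)))
              = (∑ i ∈ Icc 1 (t - 1), G i (w + Xv) * G (t - i) (w + Xv + (i : F3) * Zv)) *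
                  G (n - t) (w + (t : F3) * Zv) := by
            intro t ht
            rw [Finset.mem_Icc] at ht
            rw [Finset.sum_mul]
            refine Finset.sum_congr rfl fun i hi => ?_
            rw [Finset.mem_Icc] at hi
            have idx : n - i - (t - i) = n - t := by omega
            have harg : w + (i : F3) * Zv + ((t - i : ℕ) : F3) * Zv = w + (t : F3) * Zv := by
              have h1 : i + (t - i) = t := by omega
              calc w + (i : F3) * Zv + ((t - i : ℕ) : F3) * Zv
                  = w + ((i + (t - i) : ℕ) : F3) * Zv := by push_cast; ring
                _ = w + (t : F3) * Zv := by rw [h1]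
            have harg2 : w + (i : F3) * Zv + Xv = w + Xv + (i : F3) * Zv := by ring
            rw [idx, harg, harg2]
            ring
          rw [Finset.sum_congr rfl q2]
          have q3 : (∑ t ∈ Icc 1 (j0 + 1),
                (∑ i ∈ Icc 1 (t - 1), G i (w + Xv) * G (t - i) (w + Xv + (i : F3) * Zv)) *
                  G (n - t) (w + (t : F3) * Zv))
              = ∑ t ∈ Icc 2 (j0 + 1), ((w + Xv + ((t - 1 : ℕ) : F3) * Xv) *
                  (G t (w + Xv) * G (n - t) (w + (t : F3) * Zv))) := by
            rw [sum_Icc_split _ 1 (j0 + 1) (by omega)]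
            have h1 : (∑ t ∈ Icc 1 1,
                (∑ i ∈ Icc 1 (t - 1), G i (w + Xv) * G (t - i) (w + Xv + (i : F3) * Zv)) *
                  G (n - t) (w + (t : F3) * Zv)) = 0 := by
              rw [Finset.Icc_self, Finset.sum_singleton]
              norm_num
            rw [h1, zero_add]
            refine Finset.sum_congr (by norm_num) fun t ht => ?_
            rw [Finset.mem_Icc] at ht
            rw [← G_rec t (by omega) (w + Xv)
              (good_ne (good_addX' (good_addX hw) (t - 1)))]
            ring
          have q4 : (∑ t ∈ Icc 1 (j0 + 1), (w + Xv + ((t - 1 : ℕ) : F3) * Xv) *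
                (G t (w + Xv) * G (n - t) (w + (t : F3) * Zv)))
              = G (n - 1) (w + 1 * Zv)
                + ∑ t ∈ Icc 2 (j0 + 1), ((w + Xv + ((t - 1 : ℕ) : F3) * Xv) *
                    (G t (w + Xv) * G (n - t) (w + (t : F3) * Zv))) := by
            rw [sum_Icc_split _ 1 (j0 + 1) (by omega)]
            congr 1
            rw [Finset.Icc_self, Finset.sum_singleton, G_one, Nat.cast_one, Nat.sub_self,
              Nat.cast_zero, zero_mul, add_zero, ← mul_assoc, mul_one_div, div_self hwx,
              one_mul]
          linear_combination q3 - q4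
        -- (7) the final coefficient identity
        have hfin2 : (w + ((n - 1 : ℕ) : F3) * Xv) *
              (∑ j ∈ Icc 1 (j0 + 1), G j (w + Xv) * G (n - j) (w + (j : F3) * Zv))
            + (∑ i ∈ Icc 1 (j0 + 1), (w + (i : F3) * Zv) *
                (G i (w + Xv) * G (n - i) (w + (i : F3) * Zv)))
            = (∑ j ∈ Icc 1 (j0 + 1), (w + (j : F3) * Zv + ((n - j - 1 : ℕ) : F3) * Xv) *
                (G j (w + Xv) * G (n - j) (w + (j : F3) * Zv)))
              + ∑ t ∈ Icc 1 (j0 + 1), (w + Xv + ((t - 1 : ℕ) : F3) * Xv) *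
                  (G t (w + Xv) * G (n - t) (w + (t : F3) * Zv)) := by
          rw [Finset.mul_sum, ← Finset.sum_add_distrib, ← Finset.sum_add_distrib]
          refine Finset.sum_congr rfl fun j hj => ?_
          rw [Finset.mem_Icc] at hj
          have hc : ((n - 1 : ℕ) : F3)
              = ((n - j - 1 : ℕ) : F3) + 1 + ((j - 1 : ℕ) : F3) := by
            have h1 : (n - j - 1) + 1 + (j - 1) = n - 1 := by omega
            calc ((n - 1 : ℕ) : F3) = (((n - j - 1) + 1 + (j - 1) : ℕ) : F3) := by rw [h1]
              _ = ((n - j - 1 : ℕ) : F3) + 1 + ((j - 1 : ℕ) : F3) := by push_cast; ring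
          rw [hc]
          ring
        -- final assembly
        rw [hP, hP1, hP2, hSd, hQ, hQ2]
        linear_combination hfin2
          + (w + ((n - 1 : ℕ) : F3) * Xv) *
            (e1 (∑ j ∈ Icc 1 (j0 + 1), G j (w + Xv) * G (n - j) (w + (j : F3) * Zv)))

      calc (∑ i ∈ Icc 1 (n - (j0 + 2) - 1),
            G (n - (j0 + 2) - i) (w + (((j0 + 2) + i : ℕ) : F3) * Zv) *
              (G ((j0 + 2) + i) w -
                (∑ j ∈ Icc 1 (j0 + 1), G j (w + Xv) *
                  G ((j0 + 2) + i - j) (w + (j : F3) * Zv)) / w))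
            / (w + ((n - 1 : ℕ) : F3) * Xv)
          + (∑ i ∈ Icc 1 (j0 + 1),
            (w + (i : F3) * Zv) * G i (w + Xv) *
              (G (n - i) (w + (i : F3) * Zv) -
                (∑ j ∈ Icc 1 ((j0 + 2) - i - 1), G j (w + (i : F3) * Zv + Xv) *
                  G (n - i - j) (w + (i : F3) * Zv + (j : F3) * Zv)) / (w + (i : F3) * Zv)))
            / (w * (w + ((n - 1 : ℕ) : F3) * Xv))
          = (w * (∑ i ∈ Icc 1 (n - (j0 + 2) - 1),
            G (n - (j0 + 2) - i) (w + (((j0 + 2) + i : ℕ) : F3) * Zv) *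
              (G ((j0 + 2) + i) w -
                (∑ j ∈ Icc 1 (j0 + 1), G j (w + Xv) *
                  G ((j0 + 2) + i - j) (w + (j : F3) * Zv)) / w))
            + (∑ i ∈ Icc 1 (j0 + 1),
            (w + (i : F3) * Zv) * G i (w + Xv) *
              (G (n - i) (w + (i : F3) * Zv) -
                (∑ j ∈ Icc 1 ((j0 + 2) - i - 1), G j (w + (i : F3) * Zv + Xv) *
                  G (n - i - j) (w + (i : F3) * Zv + (j : F3) * Zv)) / (w + (i : F3) * Zv))))
              / (w * (w + ((n - 1 : ℕ) : F3) * Xv)) := by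
            rw [← mul_div_mul_left _ (w + ((n - 1 : ℕ) : F3) * Xv) hw0, ← add_div]
        _ = G n w - (∑ j ∈ Icc 1 (j0 + 1), G j (w + Xv) * G (n - j) (w + (j : F3) * Zv)) / w := by
            rw [hE, mul_div_cancel_left₀ _ hwD]


/-- For all `k, n` with `1 ≤ k ≤ n - 2`,
`F_{k,n}(w) - F_{k+1,n}(w) = G_k(w+x) G_{n-k}(w+kz) / w`. -/
theorem F_succ_diff (k n : ℕ) (hk : 1 ≤ k) (hkn : k + 2 ≤ n) :
    Fkn k n W - Fkn (k + 1) n W = G k (W + Xv) * G (n - k) (W + (k : F3) * Zv) / W := by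
  have h1 := closedForm (k + n) k n le_rfl hk (by omega) W good_W
  have h2 := closedForm (k + 1 + n) (k + 1) n le_rfl (by omega) (by omega) W good_W
  rw [h1, h2]
  have h3 : (∑ j ∈ Icc 1 (k + 1 - 1), G j (W + Xv) * G (n - j) (W + (j : F3) * Zv))
      = (∑ j ∈ Icc 1 (k - 1), G j (W + Xv) * G (n - j) (W + (j : F3) * Zv))
        + G k (W + Xv) * G (n - k) (W + (k : F3) * Zv) := by
    rw [show k + 1 - 1 = k from rfl, sum_Icc_split _ (k - 1) k (by omega),
      show k - 1 + 1 = k from by omega, Finset.Icc_self, Finset.sum_singleton]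
  rw [h3]
  ring

end
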